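/- Let E be an exact category. The Yoneda functor Y : E → Lex(E) is fully faithful and exact: it sends every conflation (f : A → B, g : B → C) of E to a short exact sequence 0 → Y(A) → Y(B) → Y(C) → 0 in the abelian category Lex(E) (i.e. Y(f) is a kernel of Y(g) and Y(g) is a cokernel of Y(f)). -/

import Mathlib

open CategoryTheory Limits Opposite

universe u

namespace Env

section Basics

variable {C : Type*} [Category C]

/-- `g` is a weak kernel of `f`. -/
def IsWeakKernel [Limits.HasZeroMorphisms C] {A B K : C} (f : B ⟶ A) (g : K ⟶ B) : Prop :=
  g ≫ f = 0 ∧ ∀ ⦃K' : C⦄ (g' : K' ⟶ B), g' ≫ f = 0 → ∃ t : K' ⟶ K, t ≫ g = g'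

/-- `h` is a weak cokernel of `f`. -/
def IsWeakCokernel [Limits.HasZeroMorphisms C] {A B Q : C} (f : A ⟶ B) (h : B ⟶ Q) : Prop :=
  f ≫ h = 0 ∧ ∀ ⦃Q' : C⦄ (h' : B ⟶ Q'), f ≫ h' = 0 → ∃ t : Q ⟶ Q', h ≫ t = h'

/-- A kernel–cokernel pair: `f ≫ g = 0`, `f` is a kernel of `g` and `g` is a cokernel of `f`. -/
structure IsKernelCokernelPair [Limits.HasZeroMorphisms C] {A B X : C}
    (f : A ⟶ B) (g : B ⟶ X) : Prop where
  zero : f ≫ g = 0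
  isKernel : Nonempty (IsLimit (KernelFork.ofι f zero))
  isCokernel : Nonempty (IsColimit (CokernelCofork.ofπ g zero))

end Basics

lemma map_comp_zero {C : Type*} [Category C] [Preadditive C]
    {D : Type*} [Category D] [Preadditive D]
    (F : C ⥤ D) (hF : F.Additive) {X Y Z : C} {f : X ⟶ Y} {g : Y ⟶ Z}
    (wzero : f ≫ g = 0) : F.map f ≫ F.map g = 0 := by
  haveI := hF
  rw [← F.map_comp, wzero, Functor.map_zero]

/-- A Quillen exact structure on an additive category: a distinguished class of conflations
(kernel–cokernel pairs) satisfying Quillen's axioms. -/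
structure ExactStructure (E : Type*) [Category E] [Preadditive E] where
  /-- `conf f g` means that `(f, g)` is a conflation. -/
  conf : ∀ ⦃A B C : E⦄, (A ⟶ B) → (B ⟶ C) → Prop
  conf_pair : ∀ ⦃A B C : E⦄ (f : A ⟶ B) (g : B ⟶ C), conf f g → IsKernelCokernelPair f g
  defl_id : ∀ X : E, ∃ (A : E) (f : A ⟶ X), conf f (𝟙 X)
  defl_comp : ∀ ⦃A B C : E⦄ (g : A ⟶ B) (g' : B ⟶ C),
    (∃ (K : E) (f : K ⟶ A), conf f g) → (∃ (K : E) (f : K ⟶ B), conf f g') →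
    ∃ (K : E) (f : K ⟶ A), conf f (g ≫ g')
  defl_pullback : ∀ ⦃B C C' : E⦄ (g : B ⟶ C) (h : C' ⟶ C),
    (∃ (K : E) (f : K ⟶ B), conf f g) →
    ∃ (B' : E) (p : B' ⟶ B) (q : B' ⟶ C') (w : p ≫ g = q ≫ h),
      (∃ (K : E) (f : K ⟶ B'), conf f q) ∧ Nonempty (IsLimit (PullbackCone.mk p q w))
  infl_pushout : ∀ ⦃A B A' : E⦄ (f : A ⟶ B) (h : A ⟶ A'),
    (∃ (C : E) (g : B ⟶ C), conf f g) →
    ∃ (B' : E) (p : B ⟶ B') (q : A' ⟶ B') (w : f ≫ p = h ≫ q),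
      (∃ (C : E) (g : B' ⟶ C), conf q g) ∧ Nonempty (IsColimit (PushoutCocone.mk p q w))

section Exact

variable {E : Type*} [Category E] [Preadditive E]

/-- `g` is a deflation for the exact structure `S`. -/
def ExactStructure.IsDeflation (S : ExactStructure E) {B C : E} (g : B ⟶ C) : Prop :=
  ∃ (K : E) (f : K ⟶ B), S.conf f g

/-- `f` is an inflation for the exact structure `S`. -/
def ExactStructure.IsInflation (S : ExactStructure E) {A B : E} (f : A ⟶ B) : Prop :=
  ∃ (C : E) (g : B ⟶ C), S.conf f g

/-- A functor from an exact category to an additive category is right exact if it is additive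
and for every conflation `(f, g)`, `F g` is a cokernel of `F f`. -/
structure IsRightExact (S : ExactStructure E) {B : Type*} [Category B] [Preadditive B]
    (F : E ⥤ B) : Prop where
  additive : F.Additive
  preserves : ∀ ⦃A X C : E⦄ (f : A ⟶ X) (g : X ⟶ C) (h : S.conf f g),
    Nonempty (IsColimit (CokernelCofork.ofπ (F.map g)
      (map_comp_zero F additive (S.conf_pair f g h).zero)))

/-- A functor from an exact category to an additive category is left exact if it is additive
and for every conflation `(f, g)`, `F f` is a kernel of `F g`. -/
structure IsLeftExact (S : ExactStructure E) {B : Type*} [Category B] [Preadditive B]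
    (F : E ⥤ B) : Prop where
  additive : F.Additive
  preserves : ∀ ⦃A X C : E⦄ (f : A ⟶ X) (g : X ⟶ C) (h : S.conf f g),
    Nonempty (IsLimit (KernelFork.ofι (F.map f)
      (map_comp_zero F additive (S.conf_pair f g h).zero)))

/-- `g : C ⟶ B` is an Ext-kernel of `f : B ⟶ A` (w.r.t. the exact structure `S`):
`g ≫ f = 0` and for every `g' : C' ⟶ B` with `g' ≫ f = 0` there is a deflation
`d : D ⟶ C'` such that `d ≫ g'` factors through `g`. -/
def IsExtKernel (S : ExactStructure E) {A B C : E} (f : B ⟶ A) (g : C ⟶ B) : Prop :=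
  g ≫ f = 0 ∧ ∀ ⦃C' : E⦄ (g' : C' ⟶ B), g' ≫ f = 0 →
    ∃ (D : E) (d : D ⟶ C'), S.IsDeflation d ∧ ∃ t : D ⟶ C, t ≫ g = d ≫ g'

/-- An exact category is left Ext-coherent if every morphism admits an Ext-kernel. -/
def LeftExtCoherent (S : ExactStructure E) : Prop :=
  ∀ ⦃B A : E⦄ (f : B ⟶ A), ∃ (C : E) (g : C ⟶ B), IsExtKernel S f g

end Exact

/-- An additive category is left coherent if every morphism admits a weak kernel. -/
def LeftCoherent (E : Type*) [Category E] [Preadditive E] : Prop :=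
  ∀ ⦃B A : E⦄ (f : B ⟶ A), ∃ (K : E) (g : K ⟶ B), IsWeakKernel f g

section MoreDefs

variable (C : Type*) [Category C] [Preadditive C]

/-- An additive functor between additive categories preserving cokernels: every morphism
which is a cokernel (of some morphism) is sent to a cokernel of its image. -/
structure PreservesCokernelsP {C : Type*} [Category C] [Preadditive C]
    {D : Type*} [Category D] [Preadditive D] (F : C ⥤ D) : Prop where
  additive : F.Additive
  preserves : ∀ ⦃X Y Z : C⦄ (f : X ⟶ Y) (c : Y ⟶ Z) (w : f ≫ c = 0),
    Nonempty (IsColimit (CokernelCofork.ofπ c w)) →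
    Nonempty (IsColimit (CokernelCofork.ofπ (F.map c) (map_comp_zero F additive w)))

/-- An additive category is left abelian if it has cokernels and for every morphism
`f : A ⟶ B` with cokernel `c : B ⟶ X` and every `g : D ⟶ B` with `g ≫ c = 0` there is
a morphism `d : E ⟶ D` which is a cokernel (of some morphism), such that `d ≫ g` factors
through `f`. -/
structure IsLeftAbelian : Prop where
  hasCokernels : HasCokernels C
  factor : ∀ ⦃A B X : C⦄ (f : A ⟶ B) (c : B ⟶ X) (w : f ≫ c = 0),
    Nonempty (IsColimit (CokernelCofork.ofπ c w)) →
    ∀ ⦃D : C⦄ (g : D ⟶ B), g ≫ c = 0 →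
      ∃ (W E : C) (u : W ⟶ E) (d : E ⟶ D) (w' : u ≫ d = 0),
        Nonempty (IsColimit (CokernelCofork.ofπ d w')) ∧ ∃ t : E ⟶ A, t ≫ f = d ≫ g

/-- A preadditive category (with its given preadditive structure) is abelian:
it has finite biproducts, kernels and cokernels, and every monomorphism and every
epimorphism is normal. -/
def IsAbelianP : Prop :=
  HasFiniteBiproducts C ∧ HasKernels C ∧ HasCokernels C ∧
    (∀ ⦃X Y : C⦄ (f : X ⟶ Y), Mono f → Nonempty (NormalMono f)) ∧
    (∀ ⦃X Y : C⦄ (f : X ⟶ Y), Epi f → Nonempty (NormalEpi f))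

end MoreDefs

/-- An object `X` is compact (finitely presented) if `Hom(X, -)` preserves filtered colimits
(indexed by small filtered categories in `Type u`). -/
def IsCompact {C : Type*} [Category C] (X : C) : Prop :=
  ∀ (J : Type u) (_ : SmallCategory J), IsFiltered J →
    Nonempty (PreservesColimitsOfShape J (coyoneda.obj (op X)))

section RexAbelian

variable {A : Type*} [Category A] [Abelian A] {B : Type*} [Category B] [Preadditive B]

/-- A functor from an abelian category (whose conflations are all kernel–cokernel pairs,
i.e. all short exact sequences) is right exact if it is additive and sends every short exact
sequence `(f, g)` to a diagram where `F g` is a cokernel of `F f`. -/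
structure IsRightExactAb (F : A ⥤ B) : Prop where
  additive : F.Additive
  preserves : ∀ ⦃X Y Z : A⦄ (f : X ⟶ Y) (g : Y ⟶ Z) (h : IsKernelCokernelPair f g),
    Nonempty (IsColimit (CokernelCofork.ofπ (F.map g) (map_comp_zero F additive h.zero)))

/-- A functor from an abelian category (whose conflations are all kernel–cokernel pairs,
i.e. all short exact sequences) is left exact if it is additive and sends every short exact
sequence `(f, g)` to a diagram where `F f` is a kernel of `F g`. -/
structure IsLeftExactAb (F : A ⥤ B) : Prop where
  additive : F.Additive
  preserves : ∀ ⦃X Y Z : A⦄ (f : X ⟶ Y) (g : Y ⟶ Z) (h : IsKernelCokernelPair f g),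
    Nonempty (IsLimit (KernelFork.ofι (F.map f) (map_comp_zero F additive h.zero)))

end RexAbelian

section Envelope

/-- `(A, i)` is a right abelian envelope of the exact category `(E, S)`: `i` is right exact
and for every abelian category `B`, precomposition with `i` induces an equivalence from the
category of right exact functors `A ⥤ B` to the category of right exact functors `E ⥤ B`.

The equivalence given by precomposition is expressed by: precomposition with `i` sends right
exact functors to right exact functors, it is fully faithful (whiskering is a bijection on
natural transformations) and essentially surjective (every right exact `E ⥤ B` is isomorphic
to some `i ⋙ G` with `G` right exact). -/
structure IsRightAbelianEnvelope.{u₀, w₀, v₁, w₁, v₂, w₂} {E : Type u₀} [Category.{w₀} E]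
    [Preadditive E] (S : ExactStructure E)
    {A : Type v₁} [Category.{w₁} A] [Abelian A] (i : E ⥤ A) : Prop where
  rightExact : IsRightExact S i
  comp_rightExact : ∀ (B : Type v₂) [Category.{w₂} B] [Abelian B] (G : A ⥤ B),
    IsRightExactAb G → IsRightExact S (i ⋙ G)
  whisker_bijective : ∀ (B : Type v₂) [Category.{w₂} B] [Abelian B] (G G' : A ⥤ B),
    IsRightExactAb G → IsRightExactAb G' →
      Function.Bijective (fun σ : G ⟶ G' => Functor.whiskerLeft i σ)
  essSurj : ∀ (B : Type v₂) [Category.{w₂} B] [Abelian B] (F : E ⥤ B),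
    IsRightExact S F → ∃ G : A ⥤ B, IsRightExactAb G ∧ Nonempty (i ⋙ G ≅ F)

/-- `(A, i)` is a left abelian envelope of the exact category `(E, S)`: the dual notion of
`IsRightAbelianEnvelope`, with left exact functors in place of right exact ones. -/
structure IsLeftAbelianEnvelope.{u₀, w₀, v₁, w₁, v₂, w₂} {E : Type u₀} [Category.{w₀} E]
    [Preadditive E] (S : ExactStructure E)
    {A : Type v₁} [Category.{w₁} A] [Abelian A] (i : E ⥤ A) : Prop where
  leftExact : IsLeftExact S i
  comp_leftExact : ∀ (B : Type v₂) [Category.{w₂} B] [Abelian B] (G : A ⥤ B),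
    IsLeftExactAb G → IsLeftExact S (i ⋙ G)
  whisker_bijective : ∀ (B : Type v₂) [Category.{w₂} B] [Abelian B] (G G' : A ⥤ B),
    IsLeftExactAb G → IsLeftExactAb G' →
      Function.Bijective (fun σ : G ⟶ G' => Functor.whiskerLeft i σ)
  essSurj : ∀ (B : Type v₂) [Category.{w₂} B] [Abelian B] (F : E ⥤ B),
    IsLeftExact S F → ∃ G : A ⥤ B, IsLeftExactAb G ∧ Nonempty (i ⋙ G ≅ F)

/-- A witness for the existence of a right abelian envelope of `(E, S)`: an abelian
category (with object type in `Type (u + 1)` and hom types in `Type u`) together with a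
right exact functor from `E` satisfying the universal property of the right abelian
envelope (where the test abelian categories are taken of the same size). -/
structure RightAbelianEnvelopeWitness {E : Type u} [SmallCategory E] [Preadditive E]
    (S : ExactStructure E) where
  A : Type (u + 1)
  [cat : Category.{u} A]
  [ab : Abelian A]
  i : E ⥤ A
  env : IsRightAbelianEnvelope.{u, u, u + 1, u, u + 1, u} S i

/-- Existence of a right abelian envelope of `(E, S)`. -/
def HasRightAbelianEnvelope {E : Type u} [SmallCategory E] [Preadditive E]
    (S : ExactStructure E) : Prop :=
  Nonempty (RightAbelianEnvelopeWitness S)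

end Envelope

section Lex

variable {E : Type u} [SmallCategory E] [Preadditive E]

/-- A functor `Eᵒᵖ ⥤ Ab` is left exact w.r.t. the exact structure `S` if it is additive and
sends every conflation `(f : A ⟶ B, g : B ⟶ C)` to an exact sequence
`0 ⟶ F C ⟶ F B ⟶ F A`: `F g.op` is injective and its image is the kernel of `F f.op`. -/
structure IsLexFunctor (S : ExactStructure E) (F : Eᵒᵖ ⥤ AddCommGrpCat.{u}) : Prop where
  additive : F.Additive
  inj : ∀ ⦃A B C : E⦄ (f : A ⟶ B) (g : B ⟶ C), S.conf f g →
    Function.Injective (F.map g.op)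
  ex : ∀ ⦃A B C : E⦄ (f : A ⟶ B) (g : B ⟶ C), S.conf f g →
    ∀ x : F.obj (op B), F.map f.op x = 0 ↔ ∃ y : F.obj (op C), F.map g.op y = x

/-- The category `Lex(E)` of left exact functors `Eᵒᵖ ⥤ Ab`. -/
abbrev LexCat (S : ExactStructure E) := ObjectProperty.FullSubcategory (IsLexFunctor S)

/-- The full subcategory of compact objects of `Lex(E)`. -/
abbrev LexCompact (S : ExactStructure E) :=
  ObjectProperty.FullSubcategory (fun F : LexCat S => IsCompact.{u} F)

lemma yoneda_isLex (S : ExactStructure E) (X : E) :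
    IsLexFunctor S (preadditiveYoneda.obj X) where
  additive := inferInstance
  inj := by
    intro A B C f g hc
    obtain ⟨w, hker, hcoker⟩ := S.conf_pair f g hc
    intro x y hxy
    exact Cofork.IsColimit.hom_ext hcoker.some hxy
  ex := by
    intro A B C f g hc
    obtain ⟨w, hker, hcoker⟩ := S.conf_pair f g hc
    intro x
    constructor
    · intro hx
      obtain ⟨y, hy⟩ := CokernelCofork.IsColimit.desc' hcoker.some x hx
      exact ⟨y, hy⟩
    · rintro ⟨y, rfl⟩
      have h : ∀ z : C ⟶ X, f ≫ g ≫ z = 0 := fun z => by rw [← Category.assoc, w, zero_comp]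
      exact h y

/-- The Yoneda embedding of `E` into `Lex(E)`, sending `X` to `Hom_E(-, X)`. -/
def yonedaLex (S : ExactStructure E) : E ⥤ LexCat S :=
  ObjectProperty.lift _ preadditiveYoneda (yoneda_isLex S)

/-- The Yoneda embedding of `E` into the subcategory of compact objects of `Lex(E)`, given
a proof that all representable functors are compact. -/
def yonedaLexC (S : ExactStructure E) (hc : ∀ X : E, IsCompact.{u} ((yonedaLex S).obj X)) :
    E ⥤ LexCompact S :=
  ObjectProperty.lift _ (yonedaLex S) hc

end Lex

section LFP

variable {C : Type*} [Category C]

/-- `X` is a filtered colimit of compact objects. -/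
def IsFilteredColimitOfCompacts (X : C) : Prop :=
  ∃ (J : Type u) (_ : SmallCategory J) (_ : IsFiltered J) (F : J ⥤ C)
    (_ : ∀ j : J, IsCompact.{u} (F.obj j)),
    Nonempty ((t : Cocone F) ×' (IsColimit t) ×' (t.pt ≅ X))

/-- A category is locally finitely presented if it has (small) filtered colimits, its
compact objects form a skeletally small full subcategory, and every object is a filtered
colimit of compact objects. -/
def IsLocallyFinitelyPresented (C : Type*) [Category C] : Prop :=
  HasFilteredColimitsOfSize.{u, u} C ∧
    EssentiallySmall.{u} (ObjectProperty.FullSubcategory (fun X : C => IsCompact.{u} X)) ∧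
    ∀ X : C, IsFilteredColimitOfCompacts.{u} X

/-- AB5: small filtered colimits are exact, i.e. for every small filtered category `J`
(such that `C` has colimits of shape `J`), the colimit functor `(J ⥤ C) ⥤ C` preserves
finite limits. -/
def AB5P (C : Type*) [Category C] : Prop :=
  ∀ (J : Type u) (_ : SmallCategory J), IsFiltered J →
    ∀ (h : HasColimitsOfShape J C),
      Nonempty (PreservesFiniteLimits (@colim J _ C _ h))

/-- A Grothendieck category: an abelian category (`IsAbelianP` w.r.t. the given preadditive
structure) with a generator and small colimits, in which small filtered colimits are
exact (AB5). -/
def IsGrothendieckP (C : Type*) [Category C] [Preadditive C] : Prop :=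
  IsAbelianP C ∧ HasColimitsOfSize.{u, u} C ∧ (∃ G : C, IsSeparator G) ∧ AB5P.{u} C

end LFP

section Proof13

variable {C₀ : Type*} [Category C₀] [HasZeroMorphisms C₀]

lemma klift_fac {X Y Z : C₀} {f : X ⟶ Y} {g : Y ⟶ Z} {w : f ≫ g = 0}
    (hker : IsLimit (KernelFork.ofι f w)) {W : C₀} (m : W ⟶ Y) (hm : m ≫ g = 0) :
    (KernelFork.IsLimit.lift' hker m hm).1 ≫ f = m := by
  simpa using (KernelFork.IsLimit.lift' hker m hm).2

lemma klift_uniq {X Y Z : C₀} {f : X ⟶ Y} {g : Y ⟶ Z} {w : f ≫ g = 0}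
    (hker : IsLimit (KernelFork.ofι f w)) {W : C₀} {a b : W ⟶ X} (h : a ≫ f = b ≫ f) :
    a = b := by
  refine Fork.IsLimit.hom_ext hker ?_
  simpa using h

variable {E : Type u} [SmallCategory E] [Preadditive E] {S : ExactStructure E}

lemma lexHom_ext {T T' : LexCat S} {a b : T ⟶ T'}
    (h : ∀ (Xop : Eᵒᵖ) (x : T.obj.obj Xop), a.hom.app Xop x = b.hom.app Xop x) : a = b := by
  apply InducedCategory.hom_ext
  apply NatTrans.ext
  funext Xop
  exact AddCommGrpCat.ext (h Xop)

/-- The lift against the image of a kernel under the Yoneda embedding. -/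
noncomputable def kernelLift {X Y Z : E} {f : X ⟶ Y} {g : Y ⟶ Z} {w : f ≫ g = 0}
    (hker : IsLimit (KernelFork.ofι f w)) {W' : LexCat S}
    (g' : W' ⟶ (yonedaLex S).obj Y)
    (hg' : ∀ (Xop : Eᵒᵖ) (x : W'.obj.obj Xop), (g'.hom.app Xop x) ≫ g = 0) :
    W' ⟶ (yonedaLex S).obj X :=
 ⟨{ app := fun Xop => AddCommGrpCat.ofHom (
      { toFun := fun x => (KernelFork.IsLimit.lift' hker (g'.hom.app Xop x) (hg' Xop x)).1
        map_zero' := by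
          apply klift_uniq hker
          erw [klift_fac, map_zero, zero_comp]
          rfl
        map_add' := fun x y => by
          apply klift_uniq hker
          erw [klift_fac, map_add, Preadditive.add_comp, klift_fac, klift_fac]
          rfl })
    naturality := by
      intro Xop Xop' u
      apply AddCommGrpCat.ext
      intro x
      show (KernelFork.IsLimit.lift' hker (g'.hom.app Xop' (W'.obj.map u x)) _).1 =
        u.unop ≫ (KernelFork.IsLimit.lift' hker (g'.hom.app Xop x) _).1
      apply klift_uniq hker
      erw [klift_fac, Category.assoc, klift_fac]
      exact ConcreteCategory.congr_hom (g'.hom.naturality u) x }⟩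

/-- The descent morphism out of the Yoneda image, given an element `γ`. -/
noncomputable def cokernelDesc {Z : E} {T' : LexCat S} (γ : T'.obj.obj (op Z)) :
    (yonedaLex S).obj Z ⟶ T' :=
  haveI : T'.obj.Additive := T'.property.additive
 ⟨{ app := fun Xop => AddCommGrpCat.ofHom (
      { toFun := fun ψ => T'.obj.map ψ.op γ
        map_zero' := by
          show T'.obj.map (0 : Xop.unop ⟶ Z).op γ = 0
          rw [op_zero, Functor.map_zero]
          rfl
        map_add' := fun ψ₁ ψ₂ => by
          show T'.obj.map (ψ₁ + ψ₂).op γ = _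
          erw [op_add, Functor.map_add]
          rfl })
    naturality := by
      intro Xop Xop' u
      apply AddCommGrpCat.ext
      intro ψ
      show T'.obj.map (u.unop ≫ (ψ : Xop.unop ⟶ Z)).op γ = T'.obj.map u (T'.obj.map ψ.op γ)
      erw [op_comp, Quiver.Hom.op_unop, Functor.map_comp]
      rfl }⟩

end Proof13

/-- The Yoneda functor `E ⥤ Lex(E)` is fully faithful and exact: it sends every conflation
`(f, g)` of `E` to a short exact sequence (`Y f` is a kernel of `Y g` and `Y g` is a
cokernel of `Y f`). -/
theorem statement_13 {E : Type u} [SmallCategory E] [Preadditive E] [HasFiniteBiproducts E]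
    (S : ExactStructure E) :
    (yonedaLex S).Full ∧ (yonedaLex S).Faithful ∧
    ∀ ⦃X Y Z : E⦄ (f : X ⟶ Y) (g : Y ⟶ Z), S.conf f g →
      IsKernelCokernelPair ((yonedaLex S).map f) ((yonedaLex S).map g) := by
  have hfull : (ObjectProperty.lift _ preadditiveYoneda (yoneda_isLex S)).Full := inferInstance
  have hfaith : (ObjectProperty.lift _ preadditiveYoneda (yoneda_isLex S)).Faithful :=
    inferInstance
  refine ⟨hfull, hfaith, ?_⟩
  intro X Y Z f g hconf
  obtain ⟨w, ⟨hker⟩, ⟨hcoker⟩⟩ := S.conf_pair f g hconf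
  have hz : (yonedaLex S).map f ≫ (yonedaLex S).map g = 0 := by
    apply lexHom_ext
    intro Xop φ
    show ((φ : Xop.unop ⟶ X) ≫ f) ≫ g = 0
    erw [Category.assoc, w, comp_zero]
  refine ⟨hz, ⟨?_⟩, ⟨?_⟩⟩
  · -- kernel
    have pz : ∀ {W' : LexCat S} (g' : W' ⟶ (yonedaLex S).obj Y),
        g' ≫ (yonedaLex S).map g = 0 →
        ∀ (Xop : Eᵒᵖ) (x : W'.obj.obj Xop), (g'.hom.app Xop x) ≫ g = 0 := by
      intro W' g' hg' Xop x
      exact congrArg (fun t : W' ⟶ (yonedaLex S).obj Z => t.hom.app Xop x) hg'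
    refine KernelFork.IsLimit.ofι _ _
      (fun {W'} g' hg' => kernelLift hker g' (pz g' hg')) ?_ ?_
    · intro W' g' hg'
      apply lexHom_ext
      intro Xop x
      exact klift_fac hker _ _
    · intro W' g' hg' m hm
      apply lexHom_ext
      intro Xop x
      apply klift_uniq hker
      show (m.hom.app Xop x) ≫ f =
        (KernelFork.IsLimit.lift' hker (g'.hom.app Xop x) (pz g' hg' Xop x)).1 ≫ f
      erw [klift_fac]
      exact congrArg (fun t : W' ⟶ (yonedaLex S).obj Y => t.hom.app Xop x) hm
  · -- cokernel
    -- for each cocone `h` we produce the element `γ` and the descent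
    have key : ∀ {T' : LexCat S} (h : (yonedaLex S).obj Y ⟶ T'),
        (yonedaLex S).map f ≫ h = 0 →
        ∃ γ : T'.obj.obj (op Z), T'.obj.map g.op γ = h.hom.app (op Y) (𝟙 Y) := by
      intro T' h hh
      have e1 : h.hom.app (op X) (𝟙 X ≫ f) = 0 :=
        congrArg (fun t : (yonedaLex S).obj X ⟶ T' => t.hom.app (op X) (𝟙 X)) hh
      have e2 : h.hom.app (op X) (f ≫ 𝟙 Y) = T'.obj.map f.op (h.hom.app (op Y) (𝟙 Y)) :=
        ConcreteCategory.congr_hom (h.hom.naturality f.op) (𝟙 Y)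
      have hβ : T'.obj.map f.op (h.hom.app (op Y) (𝟙 Y)) = 0 := by
        rw [← e2, Category.comp_id, ← Category.id_comp f]
        exact e1
      exact (T'.property.ex f g hconf _).mp hβ
    refine CokernelCofork.IsColimit.ofπ _ _
      (fun {T'} h hh => cokernelDesc (key h hh).choose) ?_ ?_
    · intro T' h hh
      apply lexHom_ext
      intro Xop ψ
      show T'.obj.map ((ψ : Xop.unop ⟶ Y) ≫ g).op (key h hh).choose = h.hom.app Xop ψ
      erw [op_comp, Functor.map_comp]
      have e3 : h.hom.app Xop (ψ ≫ 𝟙 Y) = T'.obj.map ψ.op (h.hom.app (op Y) (𝟙 Y)) :=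
        ConcreteCategory.congr_hom (h.hom.naturality ψ.op) (𝟙 Y)
      erw [Category.comp_id] at e3
      rw [← (key h hh).choose_spec] at e3
      exact e3.symm
    · intro T' h hh m hm
      apply lexHom_ext
      intro Xop ψ
      have e4 : m.hom.app Xop (ψ ≫ 𝟙 Z) = T'.obj.map (ψ : Xop.unop ⟶ Z).op (m.hom.app (op Z) (𝟙 Z)) :=
        ConcreteCategory.congr_hom (m.hom.naturality ψ.op) (𝟙 Z)
      erw [Category.comp_id] at e4
      have e5 : m.hom.app (op Y) (g ≫ 𝟙 Z) = T'.obj.map g.op (m.hom.app (op Z) (𝟙 Z)) :=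
        ConcreteCategory.congr_hom (m.hom.naturality g.op) (𝟙 Z)
      have e6 : m.hom.app (op Y) (𝟙 Y ≫ g) = h.hom.app (op Y) (𝟙 Y) :=
        congrArg (fun t : (yonedaLex S).obj Y ⟶ T' => t.hom.app (op Y) (𝟙 Y)) hm
      have hγ : m.hom.app (op Z) (𝟙 Z) = (key h hh).choose := by
        apply T'.property.inj f g hconf
        rw [← e5, Category.comp_id, (key h hh).choose_spec, ← e6, Category.id_comp]
      show m.hom.app Xop ψ = T'.obj.map ψ.op (key h hh).choose
      rw [← hγ, ← e4]

end Env
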